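/- Let A ∈ ℝ^{d×n} have orthonormal columns a₁,…,aₙ, and let x ∈ ℝⁿ be a random vector with E[xᵢ⁴] = 1 for all i, E[xᵢxⱼxₖx_ℓ] = 0 unless xᵢxⱼxₖx_ℓ is a square, and E[xᵢ²xⱼ²] ≤ τ for i ≠ j. Then, viewing E[(Ax)^{⊗4}] as a d²×d² matrix (flattening along modes {1,2},{3,4}), E[(Ax)^{⊗4}] = Σᵢ (aᵢ⊗aᵢ)(aᵢ⊗aᵢ)ᵀ + Σ_{i≠j} E[xᵢ²xⱼ²]·((aᵢ⊗aᵢ)(aⱼ⊗aⱼ)ᵀ + (aᵢaᵢᵀ)⊗(aⱼaⱼᵀ) + (aⱼaᵢᵀ)⊗(aᵢaⱼᵀ)), and the last two sums each have spectral norm at most τ. -/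

import Mathlib

open Matrix
open scoped Kronecker

noncomputable def specNorm {m n : Type*} [Fintype m] [Fintype n] [DecidableEq n]
    (M : Matrix m n ℝ) : ℝ :=
  ‖LinearMap.toContinuousLinearMap (Matrix.toEuclideanLin M)‖

noncomputable def frobNorm {m n : Type*} [Fintype m] [Fintype n]
    (M : Matrix m n ℝ) : ℝ :=
  Real.sqrt (∑ i, ∑ j, (M i j) ^ 2)

open MeasureTheory

section Aux

lemma sum_dot_collapse {m ι : Type*} [Fintype m] [Fintype ι] [DecidableEq ι] (S : Finset ι)
    (g : ι → ℝ) (u : ι → m → ℝ)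
    (hu : ∀ s ∈ S, ∀ t ∈ S, (∑ q, u s q * u t q) = if s = t then (1:ℝ) else 0) :
    ∑ p, (∑ s ∈ S, g s * u s p) ^ 2 = ∑ s ∈ S, g s ^ 2 := by
  have h1 : ∀ p, (∑ s ∈ S, g s * u s p) ^ 2
      = ∑ s ∈ S, ∑ t ∈ S, g s * g t * (u s p * u t p) := by
    intro p; rw [sq, Finset.sum_mul_sum]
    exact Finset.sum_congr rfl fun s _ => Finset.sum_congr rfl fun t _ => by ring
  simp_rw [h1]
  rw [Finset.sum_comm]
  refine Finset.sum_congr rfl fun s hs => ?_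
  rw [Finset.sum_comm]
  have h2 : ∀ t ∈ S, (∑ p, g s * g t * (u s p * u t p)) = if s = t then g s ^ 2 else 0 := by
    intro t ht
    rw [← Finset.mul_sum, hu s hs t ht]
    by_cases h : s = t <;> simp [h, sq]
  rw [Finset.sum_congr rfl h2, Finset.sum_ite_eq, if_pos hs]

lemma bessel_aux {m ι : Type*} [Fintype m] [Fintype ι] [DecidableEq ι] (S : Finset ι)
    (w : ι → m → ℝ)
    (hw : ∀ s ∈ S, ∀ t ∈ S, (∑ q, w s q * w t q) = if s = t then (1:ℝ) else 0)
    (v : m → ℝ) :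
    ∑ s ∈ S, (∑ q, w s q * v q) ^ 2 ≤ ∑ q, (v q) ^ 2 := by
  set β : ι → ℝ := fun s => ∑ q, w s q * v q with hβ
  have hA : ∑ q, v q * (∑ s ∈ S, β s * w s q) = ∑ s ∈ S, β s ^ 2 := by
    simp_rw [Finset.mul_sum]
    rw [Finset.sum_comm]
    refine Finset.sum_congr rfl fun s _ => ?_
    have h : ∀ q, v q * (β s * w s q) = β s * (w s q * v q) := fun q => by ring
    simp_rw [h, ← Finset.mul_sum]
    have : (∑ q, w s q * v q) = β s := rfl
    rw [this, sq]
  have hB : ∑ q, (∑ s ∈ S, β s * w s q) ^ 2 = ∑ s ∈ S, β s ^ 2 :=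
    sum_dot_collapse S β w hw
  have h0 : (0:ℝ) ≤ ∑ q, (v q - ∑ s ∈ S, β s * w s q) ^ 2 :=
    Finset.sum_nonneg fun _ _ => sq_nonneg _
  have hexp : ∑ q, (v q - ∑ s ∈ S, β s * w s q) ^ 2
      = ∑ q, (v q) ^ 2 - ∑ s ∈ S, β s ^ 2 := by
    have h : ∀ q, (v q - ∑ s ∈ S, β s * w s q) ^ 2
        = (v q) ^ 2 - 2 * (v q * (∑ s ∈ S, β s * w s q)) + (∑ s ∈ S, β s * w s q) ^ 2 :=
      fun q => by ring
    simp_rw [h]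
    rw [Finset.sum_add_distrib, Finset.sum_sub_distrib, hB, ← Finset.mul_sum, hA]
    ring
  linarith [hexp ▸ h0]

lemma specNorm_sum_le {m ι : Type*} [Fintype m] [DecidableEq m] [Fintype ι] [DecidableEq ι]
    (S : Finset ι) (τ : ℝ) (hτ : 0 ≤ τ) (c : ι → ℝ)
    (hc0 : ∀ s ∈ S, 0 ≤ c s) (hcτ : ∀ s ∈ S, c s ≤ τ)
    (u w : ι → m → ℝ)
    (hu : ∀ s ∈ S, ∀ t ∈ S, (∑ q, u s q * u t q) = if s = t then (1:ℝ) else 0)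
    (hw : ∀ s ∈ S, ∀ t ∈ S, (∑ q, w s q * w t q) = if s = t then (1:ℝ) else 0) :
    specNorm (∑ s ∈ S, c s • Matrix.vecMulVec (u s) (w s)) ≤ τ := by
  set M : Matrix m m ℝ := ∑ s ∈ S, c s • Matrix.vecMulVec (u s) (w s) with hMdef
  refine ContinuousLinearMap.opNorm_le_bound _ hτ fun v => ?_
  rw [LinearMap.coe_toContinuousLinearMap']
  set v' : m → ℝ := fun i => v i with hv'
  set β : ι → ℝ := fun s => ∑ q, w s q * v' q with hβ
  have hMv : ∀ p, Matrix.toEuclideanLin M v p = ∑ s ∈ S, (c s * β s) * u s p := by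
    intro p
    have h0 : Matrix.toEuclideanLin M v p = (M *ᵥ v') p := rfl
    rw [h0]
    simp only [Matrix.mulVec, dotProduct, hMdef, Matrix.sum_apply, Matrix.smul_apply,
      Matrix.vecMulVec_apply, smul_eq_mul, Finset.sum_mul]
    rw [Finset.sum_comm]
    refine Finset.sum_congr rfl fun s hs => ?_
    trans (∑ q, c s * (w s q * v' q) * u s p)
    · exact Finset.sum_congr rfl fun q _ => by ring
    · rw [← Finset.sum_mul, ← Finset.mul_sum]
  have hnorm_sq : ‖Matrix.toEuclideanLin M v‖ ^ 2 = ∑ s ∈ S, (c s * β s) ^ 2 := by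
    rw [EuclideanSpace.norm_eq, Real.sq_sqrt (Finset.sum_nonneg fun _ _ => by positivity)]
    simp_rw [Real.norm_eq_abs, sq_abs, hMv]
    exact sum_dot_collapse S (fun s => c s * β s) u hu
  have hbess : ∑ s ∈ S, β s ^ 2 ≤ ∑ q, (v' q) ^ 2 := bessel_aux S w hw v'
  have hvnorm : ‖v‖ ^ 2 = ∑ q, (v' q) ^ 2 := by
    rw [EuclideanSpace.norm_eq, Real.sq_sqrt (Finset.sum_nonneg fun _ _ => by positivity)]
    simp [Real.norm_eq_abs, sq_abs]
    rfl
  have hfin : ‖Matrix.toEuclideanLin M v‖ ^ 2 ≤ (τ * ‖v‖) ^ 2 := by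
    rw [hnorm_sq, mul_pow, hvnorm]
    calc ∑ s ∈ S, (c s * β s) ^ 2 ≤ ∑ s ∈ S, τ ^ 2 * β s ^ 2 := by
          refine Finset.sum_le_sum fun s hs => ?_
          rw [mul_pow]
          exact mul_le_mul_of_nonneg_right
            (pow_le_pow_left₀ (hc0 s hs) (hcτ s hs) 2) (sq_nonneg _)
      _ = τ ^ 2 * ∑ s ∈ S, β s ^ 2 := by rw [Finset.mul_sum]
      _ ≤ τ ^ 2 * ∑ q, (v' q) ^ 2 := mul_le_mul_of_nonneg_left hbess (sq_nonneg _)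
  exact le_of_pow_le_pow_left₀ two_ne_zero (by positivity) hfin

lemma kron_rank_one {d : ℕ} (b c b' c' : Fin d → ℝ) :
    Matrix.vecMulVec b c ⊗ₖ Matrix.vecMulVec b' c'
      = Matrix.vecMulVec (fun p : Fin d × Fin d => b p.1 * b' p.2)
          (fun q : Fin d × Fin d => c q.1 * c' q.2) := by
  ext ⟨p1, p2⟩ ⟨q1, q2⟩
  simp [Matrix.kroneckerMap_apply, Matrix.vecMulVec_apply]
  ring

lemma pair_dot {d n : ℕ} (a : Fin n → Fin d → ℝ)
    (ha : ∀ i j, a i ⬝ᵥ a j = if i = j then (1 : ℝ) else 0) (i j k l : Fin n) :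
    (∑ p : Fin d × Fin d, (a i p.1 * a j p.2) * (a k p.1 * a l p.2))
      = if i = k ∧ j = l then (1:ℝ) else 0 := by
  rw [Fintype.sum_prod_type]
  have h1 : ∀ p1, ∑ p2, (a i p1 * a j p2) * (a k p1 * a l p2)
      = (a i p1 * a k p1) * ∑ p2, a j p2 * a l p2 := by
    intro p1
    rw [Finset.mul_sum]
    exact Finset.sum_congr rfl fun p2 _ => by ring
  simp_rw [h1]
  rw [← Finset.sum_mul]
  have hik := ha i k
  have hjl := ha j l
  rw [dotProduct] at hik hjl
  rw [hik, hjl]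
  by_cases h1 : i = k <;> by_cases h2 : j = l <;> simp [h1, h2]

lemma sum_diag_prod {α : Type*} [Fintype α] [DecidableEq α] (f : α × α → ℝ) :
    ∑ pr ∈ Finset.univ.filter (fun pr : α × α => pr.1 = pr.2), f pr = ∑ i, f (i, i) := by
  rw [Finset.sum_filter, Fintype.sum_prod_type]
  simp

lemma split_double_sum {α : Type*} [Fintype α] [DecidableEq α] (f : α → α → ℝ) :
    ∑ i, ∑ k, f i k
      = (∑ pr ∈ Finset.univ.filter (fun pr : α × α => pr.1 ≠ pr.2), f pr.1 pr.2)
        + ∑ i, f i i := by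
  rw [← Finset.sum_product', Finset.univ_product_univ,
    ← Finset.sum_filter_add_sum_filter_not Finset.univ (fun pr : α × α => pr.1 ≠ pr.2)]
  congr 1
  have h : Finset.univ.filter (fun pr : α × α => ¬ pr.1 ≠ pr.2)
      = Finset.univ.filter (fun pr : α × α => pr.1 = pr.2) := by
    simp [not_not]
  rw [h]
  exact sum_diag_prod (fun pr => f pr.1 pr.2)

end Aux

/-- Decomposition of the flattened fourth moment matrix `E[(Ax)^{⊗4}]` for a dictionary
with orthonormal columns and a distribution with the stated fourth-moment structure;
the two structured error terms have spectral norm at most `τ`. -/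
theorem fourth_moment_decomposition {d n : ℕ} (τ : ℝ) (hτ : 0 ≤ τ)
    (a : Fin n → Fin d → ℝ)
    (ha : ∀ i j, a i ⬝ᵥ a j = if i = j then (1 : ℝ) else 0)
    {Ω : Type} [MeasureSpace Ω] [IsProbabilityMeasure (volume : Measure Ω)]
    (x : Ω → Fin n → ℝ)
    (hint : ∀ i j k l, Integrable (fun ω => x ω i * x ω j * x ω k * x ω l))
    (h4 : ∀ i, ∫ ω, (x ω i) ^ 4 = 1)
    (hsq : ∀ i j k l, ¬ ((i = j ∧ k = l) ∨ (i = k ∧ j = l) ∨ (i = l ∧ j = k)) →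
      ∫ ω, x ω i * x ω j * x ω k * x ω l = 0)
    (hτij : ∀ i j, i ≠ j → ∫ ω, (x ω i) ^ 2 * (x ω j) ^ 2 ≤ τ)
    (M M2 M3 : Matrix (Fin d × Fin d) (Fin d × Fin d) ℝ)
    -- `M` is the flattening of `E[(Ax)^{⊗4}]` along modes `{1,2},{3,4}`:
    (hM : ∀ p q : Fin d × Fin d, M p q =
      ∫ ω, (∑ i, x ω i * a i p.1) * (∑ i, x ω i * a i p.2) *
        (∑ i, x ω i * a i q.1) * (∑ i, x ω i * a i q.2))
    -- `M2 = Σ_{i≠j} E[xᵢ²xⱼ²] (aᵢaᵢᵀ) ⊗ (aⱼaⱼᵀ)`: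
    (hM2 : M2 = ∑ pr ∈ Finset.univ.filter (fun pr : Fin n × Fin n => pr.1 ≠ pr.2),
      (∫ ω, (x ω pr.1) ^ 2 * (x ω pr.2) ^ 2) •
        (Matrix.vecMulVec (a pr.1) (a pr.1) ⊗ₖ Matrix.vecMulVec (a pr.2) (a pr.2)))
    -- `M3 = Σ_{i≠j} E[xᵢ²xⱼ²] (aⱼaᵢᵀ) ⊗ (aᵢaⱼᵀ)`:
    (hM3 : M3 = ∑ pr ∈ Finset.univ.filter (fun pr : Fin n × Fin n => pr.1 ≠ pr.2),
      (∫ ω, (x ω pr.1) ^ 2 * (x ω pr.2) ^ 2) •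
        (Matrix.vecMulVec (a pr.2) (a pr.1) ⊗ₖ Matrix.vecMulVec (a pr.1) (a pr.2))) :
    M = (∑ i, Matrix.vecMulVec (fun p : Fin d × Fin d => a i p.1 * a i p.2)
          (fun p : Fin d × Fin d => a i p.1 * a i p.2)) +
        (∑ pr ∈ Finset.univ.filter (fun pr : Fin n × Fin n => pr.1 ≠ pr.2),
          (∫ ω, (x ω pr.1) ^ 2 * (x ω pr.2) ^ 2) •
            Matrix.vecMulVec (fun p : Fin d × Fin d => a pr.1 p.1 * a pr.1 p.2)
              (fun p : Fin d × Fin d => a pr.2 p.1 * a pr.2 p.2)) +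
        M2 + M3 ∧
      specNorm M2 ≤ τ ∧ specNorm M3 ≤ τ := by
  classical
  have hE2diag : ∀ i, (∫ ω, (x ω i) ^ 2 * (x ω i) ^ 2) = 1 := by
    intro i
    have h : (fun ω => (x ω i) ^ 2 * (x ω i) ^ 2) = fun ω => (x ω i) ^ 4 :=
      funext fun ω => by ring
    rw [h, h4]
  have hE2symm : ∀ i j, (∫ ω, (x ω i) ^ 2 * (x ω j) ^ 2) = ∫ ω, (x ω j) ^ 2 * (x ω i) ^ 2 := by
    intro i j
    have h : (fun ω => (x ω i) ^ 2 * (x ω j) ^ 2) = fun ω => (x ω j) ^ 2 * (x ω i) ^ 2 :=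
      funext fun ω => by ring
    rw [h]
  have hE2nonneg : ∀ i j, 0 ≤ ∫ ω, (x ω i) ^ 2 * (x ω j) ^ 2 := by
    intro i j
    exact integral_nonneg fun ω => by positivity
  refine ⟨?_, ?_, ?_⟩
  ·
    have hkey : ∀ i j k l : Fin n, (∫ ω, x ω i * x ω j * x ω k * x ω l) =
        (if i = j ∧ k = l then ∫ ω, (x ω i) ^ 2 * (x ω k) ^ 2 else 0)
        + (if i = k ∧ j = l then ∫ ω, (x ω i) ^ 2 * (x ω j) ^ 2 else 0)
        + (if i = l ∧ j = k then ∫ ω, (x ω i) ^ 2 * (x ω j) ^ 2 else 0)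
        - (if i = j ∧ j = k ∧ k = l then 2 else 0) := by
      have hr1 : ∀ i k : Fin n, (∫ ω, x ω i * x ω i * x ω k * x ω k)
          = ∫ ω, (x ω i) ^ 2 * (x ω k) ^ 2 := by
        intro i k
        have h : (fun ω => x ω i * x ω i * x ω k * x ω k)
            = fun ω => (x ω i) ^ 2 * (x ω k) ^ 2 := funext fun ω => by ring
        rw [h]
      have hr2 : ∀ i j : Fin n, (∫ ω, x ω i * x ω j * x ω i * x ω j)
          = ∫ ω, (x ω i) ^ 2 * (x ω j) ^ 2 := by
        intro i j
        have h : (fun ω => x ω i * x ω j * x ω i * x ω j)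
            = fun ω => (x ω i) ^ 2 * (x ω j) ^ 2 := funext fun ω => by ring
        rw [h]
      have hr3 : ∀ i j : Fin n, (∫ ω, x ω i * x ω j * x ω j * x ω i)
          = ∫ ω, (x ω i) ^ 2 * (x ω j) ^ 2 := by
        intro i j
        have h : (fun ω => x ω i * x ω j * x ω j * x ω i)
            = fun ω => (x ω i) ^ 2 * (x ω j) ^ 2 := funext fun ω => by ring
        rw [h]
      intro i j k l
      by_cases h1 : i = j ∧ k = l
      · obtain ⟨rfl, rfl⟩ := h1
        by_cases h2 : i = k
        · subst h2
          have h : (fun ω => x ω i * x ω i * x ω i * x ω i) = fun ω => (x ω i) ^ 4 :=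
            funext fun ω => by ring
          rw [h, h4 i]
          simp [hE2diag i]
          norm_num
        · rw [hr1 i k]
          simp [h2]
      · by_cases h2 : i = k ∧ j = l
        · obtain ⟨rfl, rfl⟩ := h2
          have hij : i ≠ j := fun h => h1 ⟨h, h⟩
          rw [hr2 i j]
          simp [hij, Ne.symm hij]
        · by_cases h3 : i = l ∧ j = k
          · obtain ⟨rfl, rfl⟩ := h3
            have hij : i ≠ j := fun h => h1 ⟨h, h.symm⟩
            rw [hr3 i j]
            simp [hij, Ne.symm hij]
          · rw [hsq i j k l (by tauto)]
            have h4' : ¬ (i = j ∧ j = k ∧ k = l) := fun h => h1 ⟨h.1, h.2.2⟩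
            simp [if_neg h1, if_neg h2, if_neg h3, if_neg h4']
    have hMsum : ∀ p q : Fin d × Fin d, M p q = ∑ l, ∑ k, ∑ j, ∑ i : Fin n,
        (∫ ω, x ω i * x ω j * x ω k * x ω l) * (a i p.1 * a j p.2 * a k q.1 * a l q.2) := by
      intro p q
      rw [hM p q]
      have hfun : (fun ω => (∑ i, x ω i * a i p.1) * (∑ i, x ω i * a i p.2) *
          (∑ i, x ω i * a i q.1) * (∑ i, x ω i * a i q.2))
          = fun ω => ∑ l, ∑ k, ∑ j, ∑ i : Fin n,
              (x ω i * x ω j * x ω k * x ω l) * (a i p.1 * a j p.2 * a k q.1 * a l q.2) := by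
        funext ω
        simp only [Finset.sum_mul, Finset.mul_sum]
        refine Finset.sum_congr rfl fun l _ => Finset.sum_congr rfl fun k _ =>
          Finset.sum_congr rfl fun j _ => Finset.sum_congr rfl fun i _ => by ring
      rw [hfun]
      rw [integral_finset_sum _ (fun l _ => integrable_finset_sum _ fun k _ =>
        integrable_finset_sum _ fun j _ => integrable_finset_sum _ fun i _ =>
          (hint i j k l).mul_const _)]
      refine Finset.sum_congr rfl fun l _ => ?_
      rw [integral_finset_sum _ (fun k _ => integrable_finset_sum _ fun j _ =>
        integrable_finset_sum _ fun i _ => (hint i j k l).mul_const _)]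
      refine Finset.sum_congr rfl fun k _ => ?_
      rw [integral_finset_sum _ (fun j _ => integrable_finset_sum _ fun i _ =>
        (hint i j k l).mul_const _)]
      refine Finset.sum_congr rfl fun j _ => ?_
      rw [integral_finset_sum _ (fun i _ => (hint i j k l).mul_const _)]
      exact Finset.sum_congr rfl fun i _ => integral_mul_const _ _
    ext p q
    rw [hMsum p q, hM2, hM3]
    simp only [Matrix.add_apply, Matrix.sum_apply, Matrix.smul_apply, Matrix.vecMulVec_apply,
      Matrix.kroneckerMap_apply, smul_eq_mul]
    simp_rw [hkey]
    simp only [add_mul, sub_mul, ite_mul, zero_mul, Finset.sum_add_distrib,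
      Finset.sum_sub_distrib, ite_and, Finset.sum_ite_irrel, Finset.sum_const_zero,
      Finset.sum_ite_eq, Finset.sum_ite_eq', Finset.mem_univ, if_true]
    rw [split_double_sum, split_double_sum, split_double_sum]
    have hF1 : (∑ pr ∈ Finset.univ.filter (fun pr : Fin n × Fin n => pr.1 ≠ pr.2),
          (∫ ω, x ω pr.2 ^ 2 * x ω pr.1 ^ 2) * (a pr.2 p.1 * a pr.2 p.2 * a pr.1 q.1 * a pr.1 q.2))
        = ∑ pr ∈ Finset.univ.filter (fun pr : Fin n × Fin n => pr.1 ≠ pr.2),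
          (∫ ω, x ω pr.1 ^ 2 * x ω pr.2 ^ 2) * (a pr.1 p.1 * a pr.1 p.2 * (a pr.2 q.1 * a pr.2 q.2)) := by
      refine Finset.sum_equiv (Equiv.prodComm _ _) (fun pr => ?_) (fun pr _ => ?_)
      · simp [ne_comm]
      · simp only [Equiv.prodComm_apply, Prod.fst_swap, Prod.snd_swap]
        ring
    have hF2 : (∑ pr ∈ Finset.univ.filter (fun pr : Fin n × Fin n => pr.1 ≠ pr.2),
          (∫ ω, x ω pr.2 ^ 2 * x ω pr.1 ^ 2) * (a pr.2 p.1 * a pr.1 p.2 * a pr.2 q.1 * a pr.1 q.2))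
        = ∑ pr ∈ Finset.univ.filter (fun pr : Fin n × Fin n => pr.1 ≠ pr.2),
          (∫ ω, x ω pr.1 ^ 2 * x ω pr.2 ^ 2) * (a pr.1 p.1 * a pr.1 q.1 * (a pr.2 p.2 * a pr.2 q.2)) := by
      refine Finset.sum_equiv (Equiv.prodComm _ _) (fun pr => ?_) (fun pr _ => ?_)
      · simp [ne_comm]
      · simp only [Equiv.prodComm_apply, Prod.fst_swap, Prod.snd_swap]
        ring
    have hF3 : (∑ pr ∈ Finset.univ.filter (fun pr : Fin n × Fin n => pr.1 ≠ pr.2),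
          (∫ ω, x ω pr.1 ^ 2 * x ω pr.2 ^ 2) * (a pr.1 p.1 * a pr.2 p.2 * a pr.2 q.1 * a pr.1 q.2))
        = ∑ pr ∈ Finset.univ.filter (fun pr : Fin n × Fin n => pr.1 ≠ pr.2),
          (∫ ω, x ω pr.1 ^ 2 * x ω pr.2 ^ 2) * (a pr.2 p.1 * a pr.1 q.1 * (a pr.1 p.2 * a pr.2 q.2)) := by
      refine Finset.sum_equiv (Equiv.prodComm _ _) (fun pr => ?_) (fun pr _ => ?_)
      · simp [ne_comm]
      · simp only [Equiv.prodComm_apply, Prod.fst_swap, Prod.snd_swap]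
        rw [hE2symm pr.1 pr.2]
        ring
    have hD : (∑ i, (∫ ω, x ω i ^ 2 * x ω i ^ 2) * (a i p.1 * a i p.2 * a i q.1 * a i q.2))
        = ∑ i, a i p.1 * a i p.2 * (a i q.1 * a i q.2) :=
      Finset.sum_congr rfl fun i _ => by rw [hE2diag i]; ring
    have hS4 : (∑ i, 2 * (a i p.1 * a i p.2 * a i q.1 * a i q.2))
        = 2 * ∑ i, a i p.1 * a i p.2 * (a i q.1 * a i q.2) := by
      rw [Finset.mul_sum]
      exact Finset.sum_congr rfl fun i _ => by ring
    rw [hF1, hF2, hF3, hD, hS4]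
    ring
  · -- M2 bound
    rw [hM2]
    simp_rw [kron_rank_one]
    refine specNorm_sum_le _ τ hτ _ (fun s _ => hE2nonneg s.1 s.2)
      (fun s hs => hτij s.1 s.2 (by simpa using hs)) _ _ ?_ ?_ <;>
    · intro s _ t _
      have h := pair_dot a ha s.1 s.2 t.1 t.2
      rw [h]
      simp [Prod.ext_iff]
  · -- M3 bound
    rw [hM3]
    simp_rw [kron_rank_one]
    refine specNorm_sum_le _ τ hτ _ (fun s _ => hE2nonneg s.1 s.2)
      (fun s hs => hτij s.1 s.2 (by simpa using hs)) _ _ ?_ ?_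
    · intro s _ t _
      have h := pair_dot a ha s.2 s.1 t.2 t.1
      rw [h]
      simp [Prod.ext_iff, and_comm]
    · intro s _ t _
      have h := pair_dot a ha s.1 s.2 t.1 t.2
      rw [h]
      simp [Prod.ext_iff]
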